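/- arXiv:1404.6380 — 3 statements merged into one kernel-verified Lean document; each statement's English description precedes it below -/
import Mathlib

section
/- Let Q̃(t) = (t^n, q₂(t), q₃(t)) be a polynomial parametrization where q₂(t) = m₂ t^n + Σ_{i=1}^{ℓ₂} a_{i,2} t^{r₂(n₂ − n_{i,2})} and q₃(t) = m₃ t^n + Σ_{i=1}^{ℓ₃} a_{i,3} t^{r₃(n₃ − n_{i,3})} with all a_{i,k} ≠ 0, n = lcm(n₂, n₃), rₖ = n/nₖ, 0 < n_{1,k} < ⋯ < n_{ℓₖ,k} ≤ nₖ, and gcd(nₖ, n_{1,k}, …, n_{ℓₖ,k}) = 1 for k = 2,3. If there exist a polynomial R(t) of degree r > 1 and a polynomial map Q(t) = (q̂₁(t), q̂₂(t), q̂₃(t)) with Q(R(t)) = Q̃(t), then a contradiction follows; hence Q̃ is a proper (birational) parametrization. -/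
open Polynomial

/-- A nonzero divisor of `X^n` (with `n > 0`) over `ℂ` is a constant times a power of `X`. -/
lemma aux_dvd_X_pow (n : ℕ) (hn : 0 < n) (P : Polynomial ℂ) (hP : P ≠ 0)
    (hdvd : P ∣ (X : Polynomial ℂ) ^ n) :
    P = C P.leadingCoeff * X ^ P.natDegree := by
  have hsplits : P.Splits := IsAlgClosed.splits P
  have hcard : P.roots.card = P.natDegree := (splits_iff_card_roots).mp hsplits
  have hroots : ∀ z ∈ P.roots, z = 0 := by
    intro z hz
    have hz' : P.eval z = 0 := (isRoot_of_mem_roots hz)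
    obtain ⟨s, hs⟩ := hdvd
    have : z ^ n = 0 := by
      have := congrArg (eval z) hs
      simpa [hz'] using this
    exact pow_eq_zero_iff hn.ne' |>.mp this
  have hrep : P.roots = Multiset.replicate P.natDegree 0 :=
    Multiset.eq_replicate.mpr ⟨hcard, hroots⟩
  have := C_leadingCoeff_mul_prod_multiset_X_sub_C hcard (p := P)
  rw [hrep] at this
  simpa [Multiset.map_replicate, Multiset.prod_replicate] using this.symm

/-- Key arithmetical lemma applied to each coordinate. -/
lemma aux_coord (n nk : ℕ) (hnk : 0 < nk) (hnkn : nk ∣ n) (hn0 : 0 < n)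
    (l : ℕ) (m : ℂ) (a : Fin l → ℂ) (e : Fin l → ℕ)
    (ha : ∀ i, a i ≠ 0) (he : StrictMono e) (hep : ∀ i, 0 < e i)
    (hele : ∀ i, e i ≤ nk) (hg : Nat.gcd nk (Finset.univ.gcd e) = 1)
    (r : ℕ) (hr0 : 0 < r) (hrn : r ∣ n)
    (hcoeff : ∀ j, (C m * X ^ n + ∑ i, C (a i) * X ^ ((n / nk) * (nk - e i)) :
      Polynomial ℂ).coeff j ≠ 0 → r ∣ j) :
    r ∣ n / nk := by
  set rk := n / nk with hrk
  have hrk0 : 0 < rk := Nat.div_pos (Nat.le_of_dvd hn0 hnkn) hnk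
  have hrknk : rk * nk = n := Nat.div_mul_cancel hnkn
  have hdvdE : ∀ i : Fin l, r ∣ rk * (nk - e i) := by
    intro i
    apply hcoeff
    have hcoeffval : (C m * X ^ n + ∑ j, C (a j) * X ^ (rk * (nk - e j)) :
        Polynomial ℂ).coeff (rk * (nk - e i)) = a i := by
      rw [coeff_add, coeff_C_mul, coeff_X_pow, finset_sum_coeff]
      have hlt : rk * (nk - e i) < n := by
        rw [← hrknk]
        have h1 : nk - e i < nk := by have := hep i; have := hele i; omega
        exact Nat.mul_lt_mul_of_pos_left h1 hrk0
      rw [if_neg (by omega)]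
      simp only [coeff_C_mul, coeff_X_pow]
      rw [Finset.sum_eq_single i]
      · simp
      · intro j _ hji
        rw [if_neg, mul_zero]
        intro hEq
        have : nk - e i = nk - e j := Nat.eq_of_mul_eq_mul_left hrk0 hEq
        have := hele i; have := hele j
        exact hji (he.injective (by omega))
      · intro h; exact absurd (Finset.mem_univ i) h
    rw [hcoeffval]
    exact ha i
  have hdvd_e : ∀ i : Fin l, r ∣ rk * e i := by
    intro i
    have hsum : rk * e i + rk * (nk - e i) = rk * nk := by
      rw [← Nat.mul_add]; congr 1; have := hele i; omega
    have h1 : r ∣ rk * nk := hrknk ▸ hrn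
    have h2 := Nat.dvd_sub h1 (hdvdE i)
    have : rk * nk - rk * (nk - e i) = rk * e i := by omega
    rwa [this] at h2
  have hG : r ∣ Finset.univ.gcd (fun i => rk * e i) :=
    Finset.dvd_gcd (fun i _ => hdvd_e i)
  have hGmul : Finset.univ.gcd (fun i => rk * e i) = rk * Finset.univ.gcd e := by
    rw [Finset.gcd_mul_left]
    simp
  rw [hGmul] at hG
  have h1 : r ∣ rk * nk := hrknk ▸ hrn
  have := Nat.dvd_gcd h1 hG
  rwa [Nat.gcd_mul_left, hg, mul_one] at this

/-- The polynomial parametrization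
`Q̃(t) = (t^n, m₂ t^n + Σ a_{i,2} t^{r₂(n₂−n_{i,2})}, m₃ t^n + Σ a_{i,3} t^{r₃(n₃−n_{i,3})})`
with `n = lcm(n₂,n₃)`, `rₖ = n/nₖ`, strictly increasing positive exponents
`n_{i,k} ≤ nₖ` and `gcd(nₖ, n_{1,k}, …, n_{ℓₖ,k}) = 1` cannot be written as
`Q ∘ R` with `deg R > 1`; i.e. such a decomposition yields a contradiction
(hence `Q̃` is proper). -/
theorem stmt5 (n₂ n₃ : ℕ) (hn₂ : 0 < n₂) (hn₃ : 0 < n₃)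
    (l₂ l₃ : ℕ) (m₂ m₃ : ℂ) (a₂ : Fin l₂ → ℂ) (a₃ : Fin l₃ → ℂ)
    (e₂ : Fin l₂ → ℕ) (e₃ : Fin l₃ → ℕ)
    (ha₂ : ∀ i, a₂ i ≠ 0) (ha₃ : ∀ i, a₃ i ≠ 0)
    (he₂ : StrictMono e₂) (he₃ : StrictMono e₃)
    (he₂p : ∀ i, 0 < e₂ i) (he₂le : ∀ i, e₂ i ≤ n₂)
    (he₃p : ∀ i, 0 < e₃ i) (he₃le : ∀ i, e₃ i ≤ n₃)
    (hg₂ : Nat.gcd n₂ (Finset.univ.gcd e₂) = 1)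
    (hg₃ : Nat.gcd n₃ (Finset.univ.gcd e₃) = 1)
    (n : ℕ) (hn : n = Nat.lcm n₂ n₃)
    (q₂ q₃ : Polynomial ℂ)
    (hq₂ : q₂ = C m₂ * X ^ n + ∑ i, C (a₂ i) * X ^ ((n / n₂) * (n₂ - e₂ i)))
    (hq₃ : q₃ = C m₃ * X ^ n + ∑ i, C (a₃ i) * X ^ ((n / n₃) * (n₃ - e₃ i)))
    (R p₁ p₂ p₃ : Polynomial ℂ) (hR : 1 < R.natDegree)
    (h1 : p₁.comp R = X ^ n) (h2 : p₂.comp R = q₂) (h3 : p₃.comp R = q₃) :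
    False := by
  set r := R.natDegree with hr
  have hr0 : 0 < r := by omega
  have hn0 : 0 < n := by
    rw [hn]
    exact Nat.pos_of_ne_zero (Nat.lcm_ne_zero hn₂.ne' hn₃.ne')
  -- degree bookkeeping
  have hdeg : p₁.natDegree * r = n := by
    have := congrArg natDegree h1
    rwa [natDegree_comp, natDegree_X_pow] at this
  have hrn : r ∣ n := Dvd.intro_left _ hdeg
  -- find the root α
  have hp₁deg : 0 < p₁.natDegree := by
    rcases Nat.eq_zero_or_pos p₁.natDegree with h | h
    · rw [h, zero_mul] at hdeg; omega
    · exact h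
  have hp₁d : p₁.degree ≠ 0 := by
    have := natDegree_pos_iff_degree_pos.mp hp₁deg
    exact this.ne'
  obtain ⟨α, hα⟩ := IsAlgClosed.exists_root p₁ hp₁d
  obtain ⟨s, hsp⟩ := (dvd_iff_isRoot.mpr hα : (X - C α) ∣ p₁)
  have hRdvd : (R - C α) ∣ (X : Polynomial ℂ) ^ n := by
    refine ⟨s.comp R, ?_⟩
    rw [← h1, hsp, mul_comp, sub_comp, X_comp, C_comp]
  have hRsub_ne : R - C α ≠ 0 := by
    intro h0
    have h' : (R - C α).natDegree = r := natDegree_sub_C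
    rw [h0, natDegree_zero] at h'
    omega
  have hRform : R - C α = C (R - C α).leadingCoeff * X ^ r := by
    have := aux_dvd_X_pow n hn0 (R - C α) hRsub_ne hRdvd
    rwa [natDegree_sub_C] at this
  set c := (R - C α).leadingCoeff with hc
  have hRR : R = C c * X ^ r + C α := by
    have := hRform
    linear_combination (norm := ring_nf) this
  -- key: any polynomial of the form p.comp R has support in multiples of r
  have key : ∀ (p q : Polynomial ℂ), p.comp R = q → ∀ j, q.coeff j ≠ 0 → r ∣ j := by
    intro p q hpq j hj
    have hqe : q = expand ℂ r (p.comp (C c * X + C α)) := by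
      rw [expand_eq_comp_X_pow, comp_assoc, ← hpq, hRR]
      congr 1
      simp [add_comp, mul_comp]
    rw [hqe, coeff_expand hr0] at hj
    by_contra hndvd
    simp [hndvd] at hj
  -- apply the coordinate lemma
  have hd₂ : r ∣ n / n₂ :=
    aux_coord n n₂ hn₂ (hn ▸ Nat.dvd_lcm_left n₂ n₃) hn0 l₂ m₂ a₂ e₂ ha₂ he₂ he₂p he₂le hg₂
      r hr0 hrn (fun j hj => key p₂ q₂ h2 j (by rw [← hq₂] at hj; exact hj))
  have hd₃ : r ∣ n / n₃ :=
    aux_coord n n₃ hn₃ (hn ▸ Nat.dvd_lcm_right n₂ n₃) hn0 l₃ m₃ a₃ e₃ ha₃ he₃ he₃p he₃le hg₃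
      r hr0 hrn (fun j hj => key p₃ q₃ h3 j (by rw [← hq₃] at hj; exact hj))
  -- gcd(n/n₂, n/n₃) = 1
  set g := Nat.gcd n₂ n₃ with hg
  have hg0 : 0 < g := Nat.gcd_pos_of_pos_left n₃ hn₂
  have hmul : n * g = n₂ * n₃ := by rw [hn, hg, mul_comm]; exact Nat.gcd_mul_lcm n₂ n₃
  have h2' : (n / n₂) * g = n₃ := by
    have hle : n₂ ∣ n := hn ▸ Nat.dvd_lcm_left n₂ n₃
    have : (n / n₂) * g * n₂ = n₃ * n₂ := by
      calc (n / n₂) * g * n₂ = (n / n₂ * n₂) * g := by ring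
        _ = n * g := by rw [Nat.div_mul_cancel hle]
        _ = n₂ * n₃ := hmul
        _ = n₃ * n₂ := by ring
    exact Nat.eq_of_mul_eq_mul_right hn₂ this
  have h3' : (n / n₃) * g = n₂ := by
    have hle : n₃ ∣ n := hn ▸ Nat.dvd_lcm_right n₂ n₃
    have : (n / n₃) * g * n₃ = n₂ * n₃ := by
      calc (n / n₃) * g * n₃ = (n / n₃ * n₃) * g := by ring
        _ = n * g := by rw [Nat.div_mul_cancel hle]
        _ = n₂ * n₃ := hmul
    exact Nat.eq_of_mul_eq_mul_right hn₃ this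
  have hcop : Nat.Coprime (n₂ / g) (n₃ / g) := Nat.coprime_div_gcd_div_gcd hg0
  have hA : n / n₂ = n₃ / g := by
    rw [← h2', Nat.mul_div_cancel _ hg0]
  have hB : n / n₃ = n₂ / g := by
    rw [← h3', Nat.mul_div_cancel _ hg0]
  have : r ∣ Nat.gcd (n / n₂) (n / n₃) := Nat.dvd_gcd hd₂ hd₃
  rw [hA, hB, Nat.gcd_comm] at this
  rw [hcop] at this
  have := Nat.le_of_dvd one_pos this
  omega
end

section
/- If a polynomial q(t) ∈ ℂ[t] satisfies q(R(t)) = t^n for some polynomial R(t) ∈ ℂ[t] of degree r ≥ 1, then R(t) = c·t^r + R(0) for some nonzero constant c, q(t) = c'·(t − R(0))^k for some nonzero constant c', and r·k = n where k = deg q. -/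
open Polynomial

lemma all_roots_eq_aux (p : Polynomial ℂ) (hp : p ≠ 0) (a : ℂ)
    (ha : ∀ b : ℂ, p.IsRoot b → b = a) :
    p = C p.leadingCoeff * (X - C a) ^ p.natDegree := by
  have hs : p.Splits := IsAlgClosed.splits p
  have hcard : p.roots.card = p.natDegree := (splits_iff_card_roots).mp hs
  have hprod := (C_leadingCoeff_mul_prod_multiset_X_sub_C hcard).symm
  have hmap : p.roots.map (fun b => X - C b)
      = Multiset.replicate p.natDegree (X - C a) := by
    rw [Multiset.eq_replicate]
    refine ⟨by rw [Multiset.card_map, hcard], ?_⟩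
    intro x hx
    obtain ⟨b, hb, rfl⟩ := Multiset.mem_map.mp hx
    rw [ha b ((mem_roots hp).mp hb)]
  conv_lhs => rw [hprod, hmap, Multiset.prod_replicate]

/-- if `q(R(t)) = t^n` with `deg R = r ≥ 1`, then `R` is a shifted
monomial `c·t^r + R(0)`, `q` is a scaled power `c'·(t − R(0))^k` of a linear
factor with `k = deg q`, and `r·k = n`. -/
theorem stmt7 (n : ℕ) (hn : 0 < n) (q R : Polynomial ℂ) (hr : 1 ≤ R.natDegree)
    (h : q.comp R = X ^ n) :
    ∃ c c' : ℂ, c ≠ 0 ∧ c' ≠ 0 ∧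
      R = C c * X ^ R.natDegree + C (R.eval 0) ∧
      q = C c' * (X - C (R.eval 0)) ^ q.natDegree ∧
      R.natDegree * q.natDegree = n := by
  set a := R.eval 0 with ha
  have hq0 : q ≠ 0 := by
    rintro rfl
    rw [zero_comp] at h
    exact pow_ne_zero n (X_ne_zero (R := ℂ)) h.symm
  have hRdegpos : 0 < R.degree := natDegree_pos_iff_degree_pos.mp (by omega)
  -- every root of q equals a
  have hroots : ∀ b : ℂ, q.IsRoot b → b = a := by
    intro b hb
    have hdeg : 0 < (R - C b).degree := by rwa [degree_sub_C hRdegpos]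
    obtain ⟨t₀, ht₀⟩ := Complex.exists_root hdeg
    have hRt : R.eval t₀ = b := by
      simpa only [IsRoot, eval_sub, eval_C, sub_eq_zero] using ht₀
    have ht : t₀ ^ n = 0 := by
      have := congrArg (eval t₀) h
      simp only [eval_comp, eval_pow, eval_X, hRt] at this
      rw [← this]; exact hb
    have ht0 : t₀ = 0 := pow_eq_zero_iff hn.ne' |>.mp ht
    rw [← hRt, ht0, ha]
  have hq : q = C q.leadingCoeff * (X - C a) ^ q.natDegree :=
    all_roots_eq_aux q hq0 a hroots
  have hc' : q.leadingCoeff ≠ 0 := leadingCoeff_ne_zero.mpr hq0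
  have hdegn : q.natDegree * R.natDegree = n := by
    have := congrArg natDegree h
    rwa [natDegree_comp, natDegree_X_pow] at this
  have hk : 0 < q.natDegree := by
    rcases Nat.eq_zero_or_pos q.natDegree with h0 | h0
    · rw [h0, zero_mul] at hdegn; omega
    · exact h0
  set S := R - C a with hS
  have hSdeg : S.natDegree = R.natDegree := natDegree_sub_C
  have hS0 : S ≠ 0 := by
    intro h0
    rw [h0, natDegree_zero] at hSdeg
    omega
  have hSroots : ∀ s : ℂ, S.IsRoot s → s = 0 := by
    intro s hs
    have hRs : R.eval s = a := by
      simpa only [IsRoot, hS, eval_sub, eval_C, sub_eq_zero] using hs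
    have h2 := congrArg (eval s) h
    simp only [eval_comp, eval_pow, eval_X, hRs] at h2
    have hqa : q.eval a = 0 := by
      rw [hq]; simp [pow_eq_zero_iff hk.ne']
    rw [hqa] at h2
    exact pow_eq_zero_iff hn.ne' |>.mp h2.symm
  have hSeq : S = C S.leadingCoeff * (X - C 0) ^ S.natDegree :=
    all_roots_eq_aux S hS0 0 hSroots
  have hc : S.leadingCoeff ≠ 0 := leadingCoeff_ne_zero.mpr hS0
  have hSeq' : S = C S.leadingCoeff * X ^ R.natDegree := by
    rw [hSeq, hSdeg]; simp
  refine ⟨S.leadingCoeff, q.leadingCoeff, hc, hc', ?_, hq,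
    by rw [mul_comm]; exact hdegn⟩
  exact sub_eq_iff_eq_add.mp hSeq'
end

section
/- Let r₂(z) = p₂₁(ℓ(1/z))/p(ℓ(1/z)) where ℓ is a Puiseux series with ramification index N solving p(ℓ(t)) = t·p₁₁(ℓ(t)), and suppose ℓ(t) = b₀ + b₁ t^{1/N} + ⋯ + b_k t^{k/N} + (higher order terms) with b_k ≠ 0, k > 0. Writing m = deg(p₂₁) and n = deg(p), if m > n then the maximal exponent of z occurring in the Puiseux expansion of r₂(z) at z = ∞ is (m − n)·k/N. -/
open Filter Complex

lemma aux_cpow_neg_tendsto {r : ℝ} (hr : r < 0) :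
    Tendsto (fun z : ℂ => z ^ (r : ℂ)) (Bornology.cobounded ℂ) (nhds 0) := by
  rw [tendsto_zero_iff_norm_tendsto_zero]
  have h1 : ∀ z : ℂ, ‖z ^ (r : ℂ)‖ = ‖z‖ ^ r := fun z => by
    rw [Complex.norm_cpow_real]
  simp only [h1]
  have h2 := (tendsto_rpow_neg_atTop (neg_pos.mpr hr)).comp
    (tendsto_norm_cobounded_atTop (E := ℂ))
  simpa only [Function.comp_def, neg_neg] using h2

lemma aux_poly_tendsto (p : Polynomial ℂ) :
    Tendsto (fun w : ℂ => p.eval w / w ^ p.natDegree) (Bornology.cobounded ℂ)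
      (nhds p.leadingCoeff) := by
  set n := p.natDegree with hn
  have hne : ∀ᶠ w : ℂ in Bornology.cobounded ℂ, w ≠ 0 := by
    filter_upwards [tendsto_norm_cobounded_atTop.eventually_ge_atTop 1] with w hw
    intro h; rw [h] at hw; simp at hw; linarith
  have key : Tendsto (fun w : ℂ => ∑ i ∈ Finset.range (n + 1), p.coeff i * (w⁻¹) ^ (n - i))
      (Bornology.cobounded ℂ) (nhds (∑ i ∈ Finset.range (n + 1), p.coeff i * (0:ℂ) ^ (n - i))) := by
    refine tendsto_finset_sum _ (fun i _ => ?_)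
    exact tendsto_const_nhds.mul (tendsto_inv₀_cobounded.pow _)
  have hsum : (∑ i ∈ Finset.range (n + 1), p.coeff i * (0:ℂ) ^ (n - i)) = p.leadingCoeff := by
    rw [Finset.sum_eq_single n]
    · rw [Nat.sub_self, pow_zero, mul_one]; rfl
    · intro i hi hin
      have : 0 < n - i := Nat.sub_pos_of_lt (lt_of_le_of_ne (Nat.lt_succ_iff.mp (Finset.mem_range.mp hi)) hin)
      simp [zero_pow this.ne']
    · intro h; exact absurd (Finset.self_mem_range_succ n) h
  rw [hsum] at key
  refine key.congr' ?_
  filter_upwards [hne] with w hw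
  rw [Polynomial.eval_eq_sum_range, Finset.sum_div]
  refine Finset.sum_congr rfl (fun i hi => ?_)
  have hi' : i ≤ n := Nat.lt_succ_iff.mp (Finset.mem_range.mp hi)
  rw [inv_pow, pow_sub₀ _ hw hi']
  field_simp

/-- if a leaf is computed from `g(z) = ℓ(1/z) = b₀ + b₁ z^{1/N} + ⋯ +
b_k z^{k/N} + ε(z)` with `b_k ≠ 0`, `k > 0`, `ε(z) → 0`, and `r₂(z) =
p₂₁(g z)/p(g z)` with `m = deg p₂₁ > n = deg p`, then the maximal exponent of
`z` in the expansion of `r₂` at infinity is `(m − n)·k/N`: precisely,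
`r₂(z)/z^{(m−n)k/N}` tends to a nonzero constant as `|z| → ∞`. -/
theorem stmt14 (N k : ℕ) (hN : 0 < N) (hk : 0 < k)
    (b : Fin (k + 1) → ℂ) (hbk : b (Fin.last k) ≠ 0)
    (ε : ℂ → ℂ) (hε : Tendsto ε (Bornology.cobounded ℂ) (nhds 0))
    (p₂₁ p : Polynomial ℂ) (hp : p ≠ 0) (hmn : p.natDegree < p₂₁.natDegree)
    (g : ℂ → ℂ)
    (hg : ∀ z, g z = (∑ i : Fin (k + 1), b i * z ^ (((i : ℕ) / (N : ℝ) : ℝ) : ℂ)) + ε z) :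
    ∃ c : ℂ, c ≠ 0 ∧
      Tendsto
        (fun z : ℂ =>
          (p₂₁.eval (g z) / p.eval (g z)) /
            z ^ ((((p₂₁.natDegree - p.natDegree : ℕ) * k : ℝ) / (N : ℝ) : ℂ)))
        (Bornology.cobounded ℂ) (nhds c) := by
  set m := p₂₁.natDegree with hm
  set n := p.natDegree with hn
  set d := m - n with hd
  have hdn : n + d = m := Nat.add_sub_cancel' hmn.le
  set α : ℂ := (((k : ℝ) / (N : ℝ) : ℝ) : ℂ) with hα
  have hNpos : (0:ℝ) < N := Nat.cast_pos.mpr hN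
  have hαpos : (0:ℝ) < (k:ℝ) / N := by positivity
  have hne : ∀ᶠ z : ℂ in Bornology.cobounded ℂ, z ≠ 0 := by
    filter_upwards [tendsto_norm_cobounded_atTop.eventually_ge_atTop 1] with w hw
    intro h; rw [h] at hw; simp at hw; linarith
  -- h z := g z / z ^ α tendsto b_k
  have hh : Tendsto (fun z : ℂ => g z / z ^ α) (Bornology.cobounded ℂ)
      (nhds (b (Fin.last k))) := by
    have hterm : ∀ i : Fin (k+1), Tendsto
        (fun z : ℂ => b i * z ^ ((((i:ℕ):ℝ)/N - (k:ℝ)/N : ℝ) : ℂ))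
        (Bornology.cobounded ℂ)
        (nhds (if ((i:ℕ) = k) then b i else 0)) := by
      intro i
      by_cases hik : (i:ℕ) = k
      · simp only [hik, sub_self, if_pos]
        simpa [Complex.ofReal_zero, Complex.cpow_zero] using
          (tendsto_const_nhds : Tendsto (fun _ : ℂ => b i) _ (nhds (b i)))
      · have hilt : (i:ℕ) < k := lt_of_le_of_ne (Nat.lt_succ_iff.mp i.isLt) hik
        have hrneg : ((((i:ℕ)):ℝ)/N - (k:ℝ)/N : ℝ) < 0 := by
          rw [sub_neg, div_lt_div_iff_of_pos_right hNpos]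
          exact_mod_cast hilt
        rw [if_neg hik]
        simpa using tendsto_const_nhds.mul (aux_cpow_neg_tendsto hrneg)
    have hsumlim : Tendsto
        (fun z : ℂ => ∑ i : Fin (k+1), b i * z ^ ((((i:ℕ):ℝ)/N - (k:ℝ)/N : ℝ) : ℂ))
        (Bornology.cobounded ℂ)
        (nhds (∑ i : Fin (k+1), if ((i:ℕ) = k) then b i else 0)) :=
      tendsto_finset_sum _ (fun i _ => hterm i)
    have hsumval : (∑ i : Fin (k+1), if ((i:ℕ) = k) then b i else 0) = b (Fin.last k) := by
      rw [Finset.sum_eq_single (Fin.last k)]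
      · simp [Fin.val_last]
      · intro i _ hi
        rw [if_neg]
        intro h
        exact hi (Fin.ext (by simpa [Fin.val_last] using h))
      · simp
    rw [hsumval] at hsumlim
    have hepslim : Tendsto (fun z : ℂ => ε z * z ^ ((-((k:ℝ)/N) : ℝ) : ℂ))
        (Bornology.cobounded ℂ) (nhds 0) := by
      simpa using hε.mul (aux_cpow_neg_tendsto (neg_neg_iff_pos.mpr hαpos))
    have hadd := hsumlim.add hepslim
    rw [add_zero] at hadd
    refine hadd.congr' ?_
    filter_upwards [hne] with z hz
    rw [hg z, add_div, Finset.sum_div]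
    congr 1
    · refine Finset.sum_congr rfl (fun i _ => ?_)
      rw [mul_div_assoc]
      congr 1
      rw [hα, ← Complex.cpow_sub _ _ hz]
      norm_cast
    · rw [Complex.ofReal_neg, Complex.cpow_neg, hα, div_eq_mul_inv (ε z)]
  -- |g| → ∞
  have hgcob : Tendsto g (Bornology.cobounded ℂ) (Bornology.cobounded ℂ) := by
    rw [← tendsto_norm_atTop_iff_cobounded]
    have hnormh : Tendsto (fun z : ℂ => ‖g z / z ^ α‖) (Bornology.cobounded ℂ)
        (nhds ‖b (Fin.last k)‖) := hh.norm
    have hrpow : Tendsto (fun z : ℂ => ‖z‖ ^ ((k:ℝ)/N)) (Bornology.cobounded ℂ) atTop :=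
      (tendsto_rpow_atTop hαpos).comp tendsto_norm_cobounded_atTop
    have := Filter.Tendsto.pos_mul_atTop (norm_pos_iff.mpr hbk) hnormh hrpow
    refine Tendsto.congr' ?_ this
    filter_upwards [hne] with z hz
    have hzα : ‖(z : ℂ) ^ α‖ = ‖z‖ ^ ((k:ℝ)/N) := by
      rw [hα, Complex.norm_cpow_real]
    simp only [Function.comp_def, norm_div, hzα]
    rw [div_mul_cancel₀]
    exact (Real.rpow_pos_of_pos (norm_pos_iff.mpr hz) _).ne'
  have hgne : ∀ᶠ z : ℂ in Bornology.cobounded ℂ, g z ≠ 0 := by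
    filter_upwards [hgcob.eventually (tendsto_norm_cobounded_atTop.eventually_ge_atTop 1)] with z hz
    intro h; rw [h] at hz; simp at hz; linarith
  have A1 := (aux_poly_tendsto p₂₁).comp hgcob
  have A2 := (aux_poly_tendsto p).comp hgcob
  have hlcp : p.leadingCoeff ≠ 0 := Polynomial.leadingCoeff_ne_zero.mpr hp
  have hp21 : p₂₁ ≠ 0 := by
    intro h
    have : m = 0 := by rw [hm, h, Polynomial.natDegree_zero]
    omega
  have hlcp21 : p₂₁.leadingCoeff ≠ 0 := Polynomial.leadingCoeff_ne_zero.mpr hp21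
  have hPev : ∀ᶠ z : ℂ in Bornology.cobounded ℂ, p.eval (g z) ≠ 0 := by
    filter_upwards [A2.eventually_ne hlcp, hgne] with z hz hgz
    intro h
    apply hz
    simp [Function.comp_def, h]
  refine ⟨(p₂₁.leadingCoeff / p.leadingCoeff) * (b (Fin.last k)) ^ d,
    mul_ne_zero (div_ne_zero hlcp21 hlcp) (pow_ne_zero _ hbk), ?_⟩
  have hlim := ((A1.div A2 hlcp).mul (hh.pow d))
  refine hlim.congr' ?_
  filter_upwards [hne, hgne, hPev] with z hz hgz hP
  have hzα : z ^ α ≠ 0 := by simp [Complex.cpow_eq_zero_iff, hz]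
  have hE : ((((d : ℝ) * (k : ℝ) : ℝ)) : ℂ) / (((N : ℝ) : ℝ) : ℂ) = ((d : ℕ) : ℂ) * α := by
    rw [hα]
    push_cast
    ring
  rw [hE, Complex.cpow_nat_mul]
  simp only [Function.comp_def, Pi.div_apply]
  rw [div_pow, ← hm, ← hn, ← hdn, pow_add]
  field_simp [hgz, hP, hzα]
end
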